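/- (Massart's lemma) Let V ⊂ ℝ^N be a finite set with max_{v ∈ V} ‖v‖₂ ≤ b√N. Then (1/N)·E_σ[ max_{v ∈ V} ∑_{i=1}^N σ_i v_i ] ≤ b·√(2 ln|V| / N), where σ₁,…,σ_N are independent Rademacher random variables. -/

import Mathlib

set_option maxHeartbeats 1000000

open Real Finset

lemma massart_key {N : ℕ} (V : Finset (Fin N → ℝ)) (hV : V.Nonempty) (b : ℝ)
    (hb2 : ∀ v ∈ V, ∑ i, (v i) ^ 2 ≤ b ^ 2 * N) (l : ℝ) (hl : 0 < l) :
    ((2 : ℝ) ^ N)⁻¹ * (∑ s : Fin N → Bool,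
        V.sup' hV (fun v => ∑ i, (if s i then (1 : ℝ) else -1) * v i))
      ≤ Real.log V.card / l + l * b ^ 2 * N / 2 := by
  set M : (Fin N → Bool) → ℝ :=
    fun s => V.sup' hV (fun v => ∑ i, (if s i then (1 : ℝ) else -1) * v i) with hM
  have h2N : (0 : ℝ) < 2 ^ N := by positivity
  have hK : (0 : ℝ) < V.card := by exact_mod_cast hV.card_pos
  -- Jensen
  have jensen : Real.exp (l * (((2:ℝ)^N)⁻¹ * ∑ s, M s))
      ≤ ((2:ℝ)^N)⁻¹ * ∑ s, Real.exp (l * M s) := by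
    have hcard : (Fintype.card (Fin N → Bool) : ℝ) = 2 ^ N := by
      simp [Fintype.card_fun]
    have h₁ : ∑ _s : Fin N → Bool, ((2:ℝ)^N)⁻¹ = 1 := by
      rw [Finset.sum_const, Finset.card_univ, nsmul_eq_mul, hcard]
      field_simp
    have := convexOn_exp.map_sum_le (t := (univ : Finset (Fin N → Bool)))
      (w := fun _ => ((2:ℝ)^N)⁻¹) (p := fun s => l * M s)
      (fun _ _ => by positivity) h₁ (fun _ _ => trivial)
    simpa [smul_eq_mul, Finset.mul_sum, mul_left_comm, mul_comm, mul_assoc] using this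
  -- pointwise bound on exp of max
  have step2 : ∀ s : Fin N → Bool, Real.exp (l * M s)
      ≤ ∑ v ∈ V, Real.exp (l * ∑ i, (if s i then (1:ℝ) else -1) * v i) := by
    intro s
    obtain ⟨v0, hv0, hEq⟩ := Finset.exists_mem_eq_sup' hV
      (fun v => ∑ i, (if s i then (1 : ℝ) else -1) * v i)
    have h1 : M s = ∑ i, (if s i then (1:ℝ) else -1) * v0 i := hEq
    rw [h1]
    apply Finset.single_le_sum _ hv0
    intro v _
    positivity
  -- product formula for fixed v
  have step3 : ∀ v ∈ V, (∑ s : Fin N → Bool,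
      Real.exp (l * ∑ i, (if s i then (1:ℝ) else -1) * v i))
      ≤ (2:ℝ)^N * Real.exp (l^2 * b^2 * N / 2) := by
    intro v hv
    have factor : (∑ s : Fin N → Bool,
        Real.exp (l * ∑ i, (if s i then (1:ℝ) else -1) * v i))
        = ∏ i, (Real.exp (l * v i) + Real.exp (-(l * v i))) := by
      have : ∀ s : Fin N → Bool,
          Real.exp (l * ∑ i, (if s i then (1:ℝ) else -1) * v i)
          = ∏ i, Real.exp (l * ((if s i then (1:ℝ) else -1) * v i)) := by
        intro s
        rw [Finset.mul_sum, Real.exp_sum]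
      simp_rw [this]
      calc (∑ s : Fin N → Bool, ∏ i, Real.exp (l * ((if s i then (1:ℝ) else -1) * v i)))
          = ∑ s ∈ Fintype.piFinset (fun _ : Fin N => (univ : Finset Bool)),
              ∏ i, Real.exp (l * ((if s i then (1:ℝ) else -1) * v i)) := by
            rw [Fintype.piFinset_univ]
        _ = ∏ i, ∑ c : Bool, Real.exp (l * ((if c then (1:ℝ) else -1) * v i)) :=
            (Finset.prod_univ_sum (fun _ : Fin N => (univ : Finset Bool))
              (fun i c => Real.exp (l * ((if c then (1:ℝ) else -1) * v i)))).symm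
        _ = ∏ i, (Real.exp (l * v i) + Real.exp (-(l * v i))) := by
            apply Finset.prod_congr rfl
            intro i _
            rw [Fintype.sum_bool]
            norm_num [neg_mul, mul_neg]
    rw [factor]
    have hcosh : ∀ i : Fin N, Real.exp (l * v i) + Real.exp (-(l * v i))
        ≤ 2 * Real.exp ((l * v i)^2 / 2) := by
      intro i
      have := Real.cosh_le_exp_half_sq (l * v i)
      rw [Real.cosh_eq] at this
      linarith
    calc (∏ i, (Real.exp (l * v i) + Real.exp (-(l * v i))))
        ≤ ∏ i, 2 * Real.exp ((l * v i)^2 / 2) := by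
          apply Finset.prod_le_prod
          · intro i _; positivity
          · intro i _; exact hcosh i
      _ = (2:ℝ)^N * Real.exp (∑ i, (l * v i)^2 / 2) := by
          rw [Finset.prod_mul_distrib, Finset.prod_const, Finset.card_univ,
            Fintype.card_fin, Real.exp_sum]
      _ ≤ (2:ℝ)^N * Real.exp (l^2 * b^2 * N / 2) := by
          apply mul_le_mul_of_nonneg_left _ (by positivity)
          apply Real.exp_le_exp.2
          have : ∑ i, (l * v i)^2 / 2 = l^2 * (∑ i, (v i)^2) / 2 := by
            rw [← Finset.sum_div, Finset.mul_sum]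
            congr 1; apply Finset.sum_congr rfl; intro i _; ring
          rw [this]
          have := hb2 v hv
          nlinarith [sq_nonneg l]
  -- combine
  have main : Real.exp (l * (((2:ℝ)^N)⁻¹ * ∑ s, M s))
      ≤ V.card * Real.exp (l^2 * b^2 * N / 2) := by
    calc Real.exp (l * (((2:ℝ)^N)⁻¹ * ∑ s, M s))
        ≤ ((2:ℝ)^N)⁻¹ * ∑ s, Real.exp (l * M s) := jensen
      _ ≤ ((2:ℝ)^N)⁻¹ * ∑ s : Fin N → Bool, ∑ v ∈ V,
            Real.exp (l * ∑ i, (if s i then (1:ℝ) else -1) * v i) := by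
          apply mul_le_mul_of_nonneg_left _ (by positivity)
          exact Finset.sum_le_sum fun s _ => step2 s
      _ = ((2:ℝ)^N)⁻¹ * ∑ v ∈ V, ∑ s : Fin N → Bool,
            Real.exp (l * ∑ i, (if s i then (1:ℝ) else -1) * v i) := by
          rw [Finset.sum_comm]
      _ ≤ ((2:ℝ)^N)⁻¹ * ∑ _v ∈ V, (2:ℝ)^N * Real.exp (l^2 * b^2 * N / 2) := by
          apply mul_le_mul_of_nonneg_left _ (by positivity)
          exact Finset.sum_le_sum step3
      _ = V.card * Real.exp (l^2 * b^2 * N / 2) := by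
          rw [Finset.sum_const, nsmul_eq_mul]
          field_simp
  have hlog : l * (((2:ℝ)^N)⁻¹ * ∑ s, M s) ≤ Real.log V.card + l^2 * b^2 * N / 2 := by
    have h1 : (V.card : ℝ) * Real.exp (l^2 * b^2 * N / 2)
        = Real.exp (Real.log V.card + l^2 * b^2 * N / 2) := by
      rw [Real.exp_add, Real.exp_log hK]
    rw [h1] at main
    exact Real.exp_le_exp.1 main
  rw [div_add' _ _ _ hl.ne', le_div_iff₀ hl]
  nlinarith [hlog]

/-- Massart's lemma: if every `v ∈ V ⊂ ℝ^N` has Euclidean norm at most `b√N`, then the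
(normalized) Rademacher average of `V` is at most `b √(2 ln |V| / N)`. -/
theorem stmt9 {N : ℕ} (hN : 0 < N) (V : Finset (Fin N → ℝ)) (hV : V.Nonempty) (b : ℝ)
    (hb : ∀ v ∈ V, Real.sqrt (∑ i, (v i) ^ 2) ≤ b * Real.sqrt N) :
    (N : ℝ)⁻¹ * (((2 : ℝ) ^ N)⁻¹ * ∑ s : Fin N → Bool,
        V.sup' hV (fun v => ∑ i, (if s i then (1 : ℝ) else -1) * v i))
      ≤ b * Real.sqrt (2 * Real.log V.card / N) := by
  have hNR : (0 : ℝ) < N := by exact_mod_cast hN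
  have hsN : (0 : ℝ) < Real.sqrt N := Real.sqrt_pos.2 hNR
  obtain ⟨v₁, hv₁⟩ := id hV
  have hb0 : 0 ≤ b := by
    have h1 : (0:ℝ) ≤ b * Real.sqrt N := le_trans (Real.sqrt_nonneg _) (hb v₁ hv₁)
    nlinarith
  have hb2 : ∀ v ∈ V, ∑ i, (v i) ^ 2 ≤ b ^ 2 * N := by
    intro v hv
    have h1 := hb v hv
    have h2 : (0:ℝ) ≤ ∑ i, (v i) ^ 2 := by positivity
    have h3 : Real.sqrt (∑ i, (v i) ^ 2) ^ 2 = ∑ i, (v i) ^ 2 := Real.sq_sqrt h2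
    have h4 : Real.sqrt N ^ 2 = (N : ℝ) := Real.sq_sqrt hNR.le
    nlinarith [Real.sqrt_nonneg (∑ i, (v i) ^ 2)]
  have hL0 : 0 ≤ Real.log V.card := Real.log_nonneg (by exact_mod_cast hV.card_pos)
  have key := massart_key V hV b hb2
  set L := Real.log V.card with hLdef
  set E := ((2 : ℝ) ^ N)⁻¹ * ∑ s : Fin N → Bool,
      V.sup' hV (fun v => ∑ i, (if s i then (1 : ℝ) else -1) * v i) with hE
  by_cases hcase : 0 < b ∧ 0 < L
  · obtain ⟨hbpos, hLpos⟩ := hcase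
    set r := Real.sqrt (2 * L / N) with hrdef
    have hr : 0 < r := Real.sqrt_pos.2 (by positivity)
    have hr2 : r ^ 2 = 2 * L / N := Real.sq_sqrt (by positivity)
    have hLr : L = r ^ 2 * N / 2 := by rw [hr2]; field_simp
    have hl : 0 < r / b := div_pos hr hbpos
    have h5 := key (r / b) hl
    have heq : L / (r / b) + (r / b) * b ^ 2 * N / 2 = N * (b * r) := by
      rw [hLr]; field_simp; ring
    rw [heq] at h5
    rw [inv_mul_le_iff₀ hNR]
    exact h5
  · have hnonpos : E ≤ 0 := by
      have hep : ∀ ε > (0:ℝ), E ≤ ε := by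
        intro ε hε
        rcases (not_and_or.1 hcase) with hb' | hL'
        · have hb'' : b = 0 := le_antisymm (not_lt.1 hb') hb0
          have hl : (0:ℝ) < (L + 1) / ε := by positivity
          have h5 := key _ hl
          have heq : L / ((L + 1) / ε) + (L + 1) / ε * b ^ 2 * N / 2 = L * ε / (L + 1) := by
            rw [hb'']; field_simp; ring
          rw [heq] at h5
          refine h5.trans ?_
          rw [div_le_iff₀ (by positivity : (0:ℝ) < L + 1)]
          nlinarith
        · have hL'' : L = 0 := le_antisymm (not_lt.1 hL') hL0
          rcases hb0.eq_or_lt with hbz | hbpos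
          · have h5 := key 1 one_pos
            rw [← hbz, hL''] at h5
            norm_num at h5
            linarith
          · have hl : (0:ℝ) < ε / (b ^ 2 * N) := by positivity
            have h5 := key _ hl
            have heq : L / (ε / (b ^ 2 * N)) + ε / (b ^ 2 * N) * b ^ 2 * N / 2 = ε / 2 := by
              rw [hL'']; field_simp; ring
            rw [heq] at h5
            linarith
      by_contra h
      push_neg at h
      have := hep (E / 2) (by linarith)
      linarith
    have hrhs : 0 ≤ b * Real.sqrt (2 * L / N) := mul_nonneg hb0 (Real.sqrt_nonneg _)
    have hlhs : (N:ℝ)⁻¹ * E ≤ 0 := mul_nonpos_of_nonneg_of_nonpos (by positivity) hnonpos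
    linarith
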